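/- (Two-chunk lossless parallel tokenization.) Let S = S1 ++ So ++ S2, where So is the overlapped part. Write F(S1 ++ So) = [a_1, …, a_m] and F(So ++ S2) = [b_1, …, b_n]. Suppose there exist indices i1, i2 and an integer k ≥ 0 with i1 + k ≤ m and i2 + k ≤ n such that for every 0 ≤ j ≤ k: (i) a_{i1+j} = b_{i2+j}, and (ii) the spans agree in S, i.e. the global start position of a_{i1+j}, namely |a_1| + … + |a_{i1+j−1}|, equals the global start position of b_{i2+j}, namely |S1| + |b_1| + … + |b_{i2+j−1}|. Suppose moreover the matched run is long: |a_{i1}| + |a_{i1+1}| + … + |a_{i1+k}| > T. Then F(S) = [a_1, …, a_{i1+k}] ++ [b_{i2+k+1}, …, b_n]; that is, keeping the left chunk's tokens through the end of the matched run and the right chunk's tokens after the matched run reproduces exactly the tokenization of the full string S. -/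

import Mathlib

variable {α : Type*} [DecidableEq α]

/-- The longest nonempty prefix of `S` belonging to the vocabulary `V`
(falling back to the first character of `S` if no such prefix exists). -/
noncomputable def firstTok (V : Finset (List α)) (S : List α) : List α :=
  ((V.filter (fun w => w ≠ [] ∧ w <+: S)).toList.argmax List.length).getD (S.take 1)

lemma firstTok_ne_nil (V : Finset (List α)) (a : α) (s : List α) :
    firstTok V (a :: s) ≠ [] := by
  unfold firstTok
  cases h : ((V.filter (fun w => w ≠ [] ∧ w <+: (a :: s))).toList.argmax List.length) with
  | none => simp
  | some w =>
    have hw : w ∈ (V.filter (fun w => w ≠ [] ∧ w <+: (a :: s))).toList :=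
      List.argmax_mem h
    rw [Finset.mem_toList, Finset.mem_filter] at hw
    simpa using hw.2.1

/-- Greedy (WordPiece-style) tokenization with vocabulary `V`. -/
noncomputable def F (V : Finset (List α)) : List α → List (List α)
  | [] => []
  | a :: s =>
    firstTok V (a :: s) :: F V ((a :: s).drop (firstTok V (a :: s)).length)
termination_by S => S.length
decreasing_by
  have h := firstTok_ne_nil V a s
  have hpos : 0 < (firstTok V (a :: s)).length := List.length_pos_iff.mpr h
  simp only [List.length_drop, List.length_cons]
  omega

lemma F_cons (V : Finset (List α)) (a : α) (s : List α) :
    F V (a :: s) = firstTok V (a :: s) :: F V ((a :: s).drop (firstTok V (a :: s)).length) := by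
  rw [F]

lemma firstTok_prefix (V : Finset (List α)) (S : List α) : firstTok V S <+: S := by
  unfold firstTok
  cases h : ((V.filter (fun w => w ≠ [] ∧ w <+: S)).toList.argmax List.length) with
  | none => simpa using List.take_prefix 1 S
  | some w =>
    have hw : w ∈ (V.filter (fun w => w ≠ [] ∧ w <+: S)).toList := List.argmax_mem h
    rw [Finset.mem_toList, Finset.mem_filter] at hw
    simpa using hw.2.2

lemma F_join (V : Finset (List α)) : ∀ (n : ℕ) (S : List α), S.length ≤ n → (F V S).flatten = S := by
  intro n
  induction n with
  | zero =>
    intro S hS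
    have : S = [] := by cases S <;> simp_all
    subst this; simp [F]
  | succ n ih =>
    intro S hS
    cases S with
    | nil => simp [F]
    | cons a s =>
      rw [F_cons, List.flatten_cons]
      have hp := firstTok_ne_nil V a s
      have hpos : 0 < (firstTok V (a :: s)).length := List.length_pos_iff.mpr hp
      have hlen : ((a :: s).drop (firstTok V (a :: s)).length).length ≤ n := by
        simp only [List.length_drop, List.length_cons] at *
        omega
      rw [ih _ hlen]
      exact List.prefix_iff_eq_append.mp (firstTok_prefix V (a :: s))

lemma F_take_drop (V : Finset (List α)) :
    ∀ (i : ℕ) (S : List α),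
      F V S = (F V S).take i ++ F V (S.drop (((F V S).take i).map List.length).sum) := by
  intro i
  induction i with
  | zero => intro S; simp
  | succ i ih =>
    intro S
    cases S with
    | nil => simp [F]
    | cons a s =>
      rw [F_cons]
      simp only [List.take_succ_cons, List.map_cons, List.sum_cons, List.cons_append,
        List.cons.injEq, true_and]
      have e : List.drop ((firstTok V (a :: s)).length
          + (List.map List.length (List.take i (F V (List.drop (firstTok V (a :: s)).length (a :: s))))).sum) (a :: s)
          = List.drop (List.map List.length (List.take i (F V (List.drop (firstTok V (a :: s)).length (a :: s))))).sum
              (List.drop (firstTok V (a :: s)).length (a :: s)) := by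
        rw [List.drop_drop, Nat.add_comm]
      rw [e]
      exact ih _

lemma sum_take_succ_len (l : List (List α)) (i : ℕ) (h : i < l.length) :
    ((l.take (i+1)).map List.length).sum = ((l.take i).map List.length).sum + l[i].length := by
  have h' : i < (l.map List.length).length := by simpa using h
  rw [List.map_take, List.map_take]
  rw [List.sum_take_succ _ i h']
  simp

lemma pos_le_length (V : Finset (List α)) (S : List α) (i : ℕ) :
    (((F V S).take i).map List.length).sum ≤ S.length := by
  have h1 : ((F V S).map List.length).sum = S.length := by
    rw [← List.length_flatten, F_join V S.length S le_rfl]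
  have h2 : ((F V S).map List.length).sum
      = (((F V S).map List.length).take i).sum + (((F V S).map List.length).drop i).sum := by
    rw [← List.sum_append, List.take_append_drop]
  rw [← List.map_take] at h2
  omega

lemma firstTok_append (V : Finset (List α)) (Z Y : List α) (hZ : Z ≠ [])
    (hlen : ∀ w ∈ V, w.length ≤ Z.length) :
    firstTok V (Z ++ Y) = firstTok V Z := by
  have hfilter : V.filter (fun w => w ≠ [] ∧ w <+: Z ++ Y)
      = V.filter (fun w => w ≠ [] ∧ w <+: Z) := by
    apply Finset.filter_congr
    intro w hw
    constructor
    · rintro ⟨h1, h2⟩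
      refine ⟨h1, ?_⟩
      rw [List.prefix_iff_eq_take] at h2 ⊢
      rwa [List.take_append_of_le_length (hlen w hw)] at h2
    · rintro ⟨h1, h2⟩
      exact ⟨h1, h2.trans (List.prefix_append Z Y)⟩
  unfold firstTok
  rw [hfilter]
  cases Z with
  | nil => exact absurd rfl hZ
  | cons a s => simp

lemma F_append (V : Finset (List α)) (T : ℕ) (hT : ∀ w ∈ V, w.length ≤ T) :
    ∀ (i : ℕ) (Z Y : List α),
      (((F V Z).take i).map List.length).sum + T ≤ Z.length →
      F V (Z ++ Y) = (F V Z).take i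
        ++ F V (Z.drop (((F V Z).take i).map List.length).sum ++ Y) := by
  intro i
  induction i with
  | zero => intro Z Y h; simp
  | succ i ih =>
    intro Z Y h
    cases Z with
    | nil => simp [F]
    | cons a s =>
      set t := firstTok V (a :: s) with ht
      have htpre : t <+: (a :: s) := firstTok_prefix V (a :: s)
      have htle : t.length ≤ (a :: s).length := htpre.length_le
      have hTlen : T ≤ (a :: s).length := by omega
      have hfirst : firstTok V ((a :: s) ++ Y) = t := by
        rw [List.cons_append] at *
        exact firstTok_append V (a :: s) Y (by simp) (fun w hw => (hT w hw).trans hTlen)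
      rw [F_cons] at h ⊢
      simp only [← ht] at h ⊢
      simp only [List.take_succ_cons, List.map_cons, List.sum_cons] at h ⊢
      rw [List.cons_append, F_cons]
      rw [← List.cons_append, hfirst]
      have hdropapp : ((a :: s) ++ Y).drop t.length = (a :: s).drop t.length ++ Y := by
        rw [List.drop_append, Nat.sub_eq_zero_of_le htle, List.drop_zero]
      rw [hdropapp]
      have hcond : ((List.map List.length (List.take i (F V ((a :: s).drop t.length)))).sum) + T
          ≤ ((a :: s).drop t.length).length := by
        simp only [List.length_drop]
        omega
      rw [ih _ Y hcond]
      simp only [List.cons_append, List.cons.injEq, true_and]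
      congr 2
      rw [List.drop_drop, Nat.add_comm]

/-- two-chunk lossless parallel tokenization: let
`S = S1 ++ So ++ S2`, `A = F (S1 ++ So)` and `B = F (So ++ S2)`.  If there is
a run of `k + 1` matched tokens `A[i1], …, A[i1+k]` = `B[i2], …, B[i2+k]`
whose global start positions in `S` agree (the start of `A[i1+j]` is the sum
of lengths of the preceding tokens of `A`; the start of `B[i2+j]` is `|S1|`
plus the sum of lengths of the preceding tokens of `B`), and the total length
of the matched run exceeds `T` (the maximal length of a vocabulary word),
then keeping `A` up to the end of the run and `B` after the run reproduces
`F S`. -/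
theorem two_chunk_lossless (V : Finset (List α))
    (hne : ∀ w ∈ V, w ≠ []) (hsingle : ∀ a : α, [a] ∈ V)
    (T : ℕ) (hT : T = V.sup List.length)
    (S S1 So S2 : List α) (hS : S = S1 ++ So ++ S2)
    (A B : List (List α))
    (hA : A = F V (S1 ++ So)) (hB : B = F V (So ++ S2))
    (i1 i2 k : ℕ)
    (hm : i1 + k < A.length) (hn : i2 + k < B.length)
    (htok : ∀ j, (hj : j ≤ k) →
      A[i1 + j]'(by omega) = B[i2 + j]'(by omega))
    (hpos : ∀ j, j ≤ k →
      ((A.take (i1 + j)).map List.length).sum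
        = S1.length + ((B.take (i2 + j)).map List.length).sum)
    (hlong : T < (((A.drop i1).take (k + 1)).map List.length).sum) :
    F V S = A.take (i1 + k + 1) ++ B.drop (i2 + k + 1) := by
  have hTle : ∀ w ∈ V, w.length ≤ T := fun w hw => hT ▸ Finset.le_sup hw
  have h_i1 : i1 < A.length := by omega
  have h_i2 : i2 < B.length := by omega
  set W1 := S1 ++ So with hW1
  set W2 := So ++ S2 with hW2
  set p1 := ((A.take i1).map List.length).sum with hp1
  set q := ((B.take i2).map List.length).sum with hq
  set l0 := (A[i1]'h_i1).length with hl0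
  set L := (((A.drop i1).take (k + 1)).map List.length).sum with hL
  -- basic positional facts
  have hpq : p1 = S1.length + q := by
    have h := hpos 0 (Nat.zero_le k)
    simp only [Nat.add_zero] at h
    exact h
  have hAdrop : A.drop i1 = A[i1] :: A.drop (i1 + 1) := List.drop_eq_getElem_cons h_i1
  have hLsplit : L = l0 + (((A.drop (i1+1)).take k).map List.length).sum := by
    rw [hL, hAdrop]
    simp only [List.take_succ_cons, List.map_cons, List.sum_cons, hl0]
  have hsum1 : ((A.take (i1+1)).map List.length).sum = p1 + l0 :=
    sum_take_succ_len A i1 h_i1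
  have hsumrun : ((A.take (i1 + k + 1)).map List.length).sum = p1 + L := by
    have : A.take (i1 + (k + 1)) = A.take i1 ++ (A.drop i1).take (k+1) := List.take_add
    rw [show i1 + k + 1 = i1 + (k + 1) from rfl, this]
    simp [hp1, hL]
  have hbound : p1 + L ≤ W1.length := by
    have h := pos_le_length V W1 (i1 + k + 1)
    rw [← hA] at h
    omega
  have hbound1 : p1 + l0 ≤ W1.length := by
    have h := pos_le_length V W1 (i1 + 1)
    rw [← hA, hsum1] at h
    exact h
  have hTL : T < L := hlong
  have hl0L : l0 ≤ L := by omega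
  -- Step 1: F V S = A.take i1 ++ F V (W1.drop p1 ++ S2)
  have hSW : S = W1 ++ S2 := by rw [hS, hW1, List.append_assoc]
  have step1 : F V (W1 ++ S2) = A.take i1 ++ F V (W1.drop p1 ++ S2) := by
    have h := F_append V T hTle i1 W1 S2 (by rw [← hA]; omega)
    rw [← hA] at h
    exact h
  -- the remainder R
  have hRlen : (W1.drop p1).length = W1.length - p1 := List.length_drop
  have hRL : L ≤ (W1.drop p1).length := by omega
  have hFR : F V (W1.drop p1) = A.drop i1 := by
    have h := F_take_drop V i1 W1
    rw [← hA] at h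
    have h2 : A.take i1 ++ A.drop i1 = A.take i1 ++ F V (W1.drop p1) := by
      rw [List.take_append_drop]; exact h
    exact (List.append_cancel_left h2).symm
  obtain ⟨r, rs, hR⟩ : ∃ r rs, W1.drop p1 = r :: rs := by
    cases hcase : W1.drop p1 with
    | nil => rw [hcase] at hRL; simp at hRL; omega
    | cons r rs => exact ⟨r, rs, rfl⟩
  have hfirstR : firstTok V (W1.drop p1) = A[i1] := by
    rw [hR] at hFR ⊢
    rw [F_cons] at hFR
    rw [hAdrop] at hFR
    exact (List.cons.injEq _ _ _ _).mp hFR |>.1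
  -- Step 2: peel one token off F V (W1.drop p1 ++ S2)
  have hq_l0_So : q + l0 ≤ So.length := by
    rw [hW1] at hbound1
    simp only [List.length_append] at hbound1
    omega
  have hdropW2 : (W1.drop p1).drop l0 ++ S2 = W2.drop (q + l0) := by
    rw [List.drop_drop, hW1, hW2]
    rw [List.drop_append, List.drop_append]
    rw [List.drop_eq_nil_of_le (show S1.length ≤ p1 + l0 by omega)]
    rw [show p1 + l0 - S1.length = q + l0 by omega]
    rw [Nat.sub_eq_zero_of_le hq_l0_So, List.drop_zero]
    simp
  have step2 : F V (W1.drop p1 ++ S2) = A[i1] :: F V (W2.drop (q + l0)) := by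
    rw [hR, List.cons_append, F_cons, ← List.cons_append, ← hR]
    have hflen : ∀ w ∈ V, w.length ≤ (W1.drop p1).length :=
      fun w hw => le_trans (hTle w hw) (by omega)
    rw [firstTok_append V (W1.drop p1) S2 (by rw [hR]; simp) hflen, hfirstR, ← hl0]
    congr 1
    rw [List.drop_append,
      Nat.sub_eq_zero_of_le (show l0 ≤ (W1.drop p1).length by omega), List.drop_zero,
      hdropW2]
  -- Step 3: the tail is B.drop (i2+1)
  have hsumB1 : ((B.take (i2+1)).map List.length).sum = q + l0 := by
    rw [sum_take_succ_len B i2 h_i2, hq, hl0]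
    have := (htok 0 (Nat.zero_le k)).symm
    simp only [Nat.add_zero] at this
    rw [this]
  have step3 : F V (W2.drop (q + l0)) = B.drop (i2 + 1) := by
    have h := F_take_drop V (i2+1) W2
    rw [← hB, hsumB1] at h
    have h2 : B.take (i2+1) ++ B.drop (i2+1) = B.take (i2+1) ++ F V (W2.drop (q + l0)) := by
      rw [List.take_append_drop]; exact h
    exact (List.append_cancel_left h2).symm
  -- Combine
  have hmain : F V S = A.take (i1+1) ++ B.drop (i2+1) := by
    rw [hSW, step1, step2, step3]
    have e : A.take (i1+1) = A.take i1 ++ [A[i1]] := by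
      rw [List.take_succ, List.getElem?_eq_getElem h_i1]
      rfl
    rw [e, List.append_assoc, List.singleton_append]
  rw [hmain]
  -- Step 4: shift the boundary along the matched run
  have hmid : (A.drop (i1+1)).take k = (B.drop (i2+1)).take k := by
    apply List.ext_getElem
    · simp only [List.length_take, List.length_drop]
      omega
    · intro j hj1 hj2
      simp only [List.getElem_take, List.getElem_drop]
      have h := htok (j+1) (by
        simp only [List.length_take, List.length_drop] at hj1
        omega)
      convert h using 2 <;> omega
  have hAtake : A.take (i1 + k + 1) = A.take (i1+1) ++ (A.drop (i1+1)).take k := by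
    rw [show i1 + k + 1 = (i1 + 1) + k from by omega]
    exact List.take_add
  have hBdrop : B.drop (i2+1) = (B.drop (i2+1)).take k ++ B.drop (i2 + k + 1) := by
    have : (B.drop (i2+1)).drop k = B.drop (i2 + k + 1) := by
      rw [List.drop_drop]
      congr 1
      omega
    rw [← this, List.take_append_drop]
  rw [hAtake, hBdrop, hmid, List.append_assoc]
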